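/- Let Z_1, …, Z_q be pairwise commuting k-linear endomorphisms of an n-dimensional k-vector space V with Z_i^n = 0 for all i and Z_1^{n−1} ≠ 0, let ρ : A_{q,n} → End_k(V) be the k-algebra homomorphism with ρ(x_i) = Z_i, and let f_2, …, f_q ∈ k[X] be polynomials with zero constant term such that Z_j = f_j(Z_1) for j = 2, …, q. Then ker(ρ) is the ideal of A_{q,n} generated by the elements x_2 − f_2(x_1), x_3 − f_3(x_1), …, x_q − f_q(x_1). -/

import Mathlib

noncomputable section

/-- The ring of `n`-nil polynomials `A_{q,n} = k[x_1,…,x_q]/m_0^n`. -/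
abbrev Aqn (k : Type) [Field k] (q n : ℕ) : Type :=
  MvPolynomial (Fin q) k ⧸
    (Ideal.span (Set.range (MvPolynomial.X : Fin q → MvPolynomial (Fin q) k))) ^ n

/-- The image of the variable `x_i` in `A_{q,n}`. -/
def xA (k : Type) [Field k] (q n : ℕ) (i : Fin q) : Aqn k q n :=
  Ideal.Quotient.mk _ (MvPolynomial.X i)

open Polynomial in
lemma aeval_nilpotent_indep {k V : Type} [Field k] [AddCommGroup V] [Module k V]
    {n : ℕ} {Z : Module.End k V} (hZn : Z ^ n = 0) (hZ : Z ^ (n-1) ≠ 0)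
    {p : k[X]} (hdeg : p.natDegree < n) (h : aeval Z p = 0) : p = 0 := by
  by_contra hp
  set m := p.natTrailingDegree with hm
  have hcm : p.coeff m ≠ 0 := by
    rw [← Polynomial.trailingCoeff]
    exact Polynomial.trailingCoeff_nonzero_iff_nonzero.mpr hp
  have hmd : m ≤ p.natDegree := p.natTrailingDegree_le_natDegree
  have key : p.coeff m • Z ^ (n-1) = 0 := by
    have h2 := congrArg (fun w => Z ^ (n-1-m) * w) h
    simp only [mul_zero] at h2
    rw [Polynomial.aeval_eq_sum_range, Finset.mul_sum] at h2
    rw [← h2]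
    rw [Finset.sum_eq_single m]
    · rw [mul_smul_comm, ← pow_add]
      congr 2
      omega
    · intro i hi hne
      rcases lt_or_gt_of_ne hne with h1 | h2'
      · rw [Polynomial.coeff_eq_zero_of_lt_natTrailingDegree h1, zero_smul, mul_zero]
      · rw [mul_smul_comm, ← pow_add, pow_eq_zero_of_le (by omega : n ≤ n-1-m+i) hZn, smul_zero]
    · intro hnotmem
      exact absurd (Finset.mem_range.mpr (by omega)) hnotmem
  rcases smul_eq_zero.mp key with h1 | h2
  · exact hcm h1
  · exact hZ h2

/-- if `Z_1, …, Z_q` are pairwise commuting nilpotents with `Z_1^(n-1) ≠ 0` and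
`Z_j = f_j(Z_1)` for polynomials `f_j` with zero constant term, then the kernel of the induced
representation `ρ : A_{q,n} → End_k(V)` is the ideal generated by the `x_j - f_j(x_1)`. -/
theorem ker_of_regular_rep_eq_span (k : Type) [Field k] (q n : ℕ) [NeZero q]
    (hq : 1 ≤ q) (hn : 2 ≤ n)
    (V : Type) [AddCommGroup V] [Module k V] [FiniteDimensional k V]
    (hdim : Module.finrank k V = n)
    (Z : Fin q → Module.End k V)
    (hcomm : ∀ i j, Commute (Z i) (Z j))
    (hnil : ∀ i, Z i ^ n = 0)
    (hreg : Z 0 ^ (n - 1) ≠ 0)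
    (ρ : Aqn k q n →ₐ[k] Module.End k V) (hρ : ∀ i, ρ (xA k q n i) = Z i)
    (f : Fin q → Polynomial k) (hf0 : ∀ j, (f j).coeff 0 = 0)
    (hfZ : ∀ j : Fin q, j ≠ 0 → Polynomial.aeval (Z 0) (f j) = Z j) :
    RingHom.ker ρ =
      Ideal.span {y : Aqn k q n | ∃ j : Fin q, j ≠ 0 ∧
        y = xA k q n j - Polynomial.aeval (xA k q n 0) (f j)} := by
  set I : Ideal (Aqn k q n) := Ideal.span {y : Aqn k q n | ∃ j : Fin q, j ≠ 0 ∧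
        y = xA k q n j - Polynomial.aeval (xA k q n 0) (f j)} with hIdef
  have hIker : I ≤ RingHom.ker ρ := by
    rw [hIdef, Ideal.span_le]
    rintro y ⟨j, hj, rfl⟩
    simp only [SetLike.mem_coe, RingHom.mem_ker, map_sub]
    rw [← Polynomial.aeval_algHom_apply, hρ, hρ, hfZ j hj, sub_self]
  refine le_antisymm ?_ hIker
  -- x1^n = 0 in Aqn
  have hx1n : (xA k q n 0) ^ n = 0 := by
    rw [xA, ← map_pow, Ideal.Quotient.eq_zero_iff_mem]
    exact Ideal.pow_mem_pow (Ideal.subset_span (Set.mem_range_self _)) n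
  -- the quotient map
  set π : Aqn k q n →ₐ[k] (Aqn k q n ⧸ I) := Ideal.Quotient.mkₐ k I with hπ
  have hπsurj : Function.Surjective π := Ideal.Quotient.mkₐ_surjective k I
  -- the quotient by I is generated by the image of x1
  have htop : Algebra.adjoin k {π (xA k q n 0)} = ⊤ := by
    rw [eq_top_iff]
    have hgen : Algebra.adjoin k
        ((π.comp (Ideal.Quotient.mkₐ k ((Ideal.span (Set.range
            (MvPolynomial.X : Fin q → MvPolynomial (Fin q) k))) ^ n)) :
          MvPolynomial (Fin q) k →ₐ[k] (Aqn k q n ⧸ I)) ''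
          Set.range MvPolynomial.X) = ⊤ := by
      rw [← AlgHom.map_adjoin, MvPolynomial.adjoin_range_X, Algebra.map_top,
        AlgHom.range_eq_top]
      exact hπsurj.comp (Ideal.Quotient.mkₐ_surjective k _)
    rw [← hgen]
    apply Algebra.adjoin_le
    rintro _ ⟨_, ⟨j, rfl⟩, rfl⟩
    show π (xA k q n j) ∈ _
    by_cases hj : j = 0
    · subst hj; exact Algebra.subset_adjoin rfl
    · have heq : π (xA k q n j) = Polynomial.aeval (π (xA k q n 0)) (f j) := by
        rw [Polynomial.aeval_algHom_apply]
        have : xA k q n j - Polynomial.aeval (xA k q n 0) (f j) ∈ I :=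
          Ideal.subset_span ⟨j, hj, rfl⟩
        rw [hπ]
        simpa [Ideal.Quotient.mkₐ_eq_mk, Ideal.Quotient.eq] using this
      rw [heq]
      exact Polynomial.aeval_mem_adjoin_singleton k _
  intro a ha
  -- find p with π a = aeval (π x1) p
  have hmem : π a ∈ Algebra.adjoin k {π (xA k q n 0)} := htop ▸ Algebra.mem_top
  rw [Algebra.adjoin_singleton_eq_range_aeval] at hmem
  obtain ⟨p, hp0⟩ := hmem
  have hp : Polynomial.aeval (π (xA k q n 0)) p = π a := hp0
  -- reduce p mod X^n
  set p' := p %ₘ (Polynomial.X ^ n) with hp'def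
  have hmonic : (Polynomial.X ^ n : Polynomial k).Monic := Polynomial.monic_X_pow n
  have haeq : Polynomial.aeval (xA k q n 0) p = Polynomial.aeval (xA k q n 0) p' := by
    conv_lhs => rw [← Polynomial.modByMonic_add_div p (Polynomial.X ^ n)]
    rw [map_add, map_mul, map_pow, Polynomial.aeval_X, hx1n, zero_mul, add_zero]
  have hdeg : p'.natDegree < n := by
    by_cases h0 : p' = 0
    · rw [h0]; simpa using by omega
    · have := Polynomial.degree_modByMonic_lt p hmonic
      rw [Polynomial.degree_X_pow] at this
      rw [← hp'def] at this
      exact Polynomial.natDegree_lt_iff_degree_lt h0 |>.mpr (by exact_mod_cast this)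
  -- a - aeval x1 p' ∈ I
  have hsub : a - Polynomial.aeval (xA k q n 0) p' ∈ I := by
    rw [← haeq]
    have : π (a - Polynomial.aeval (xA k q n 0) p) = 0 := by
      rw [map_sub, ← Polynomial.aeval_algHom_apply, hp, sub_self]
    rwa [hπ, Ideal.Quotient.mkₐ_eq_mk, Ideal.Quotient.eq_zero_iff_mem] at this
  -- hence aeval x1 p' ∈ ker ρ
  have hker : Polynomial.aeval (xA k q n 0) p' ∈ RingHom.ker ρ := by
    have := hIker hsub
    rw [RingHom.mem_ker] at this ⊢
    rw [map_sub] at this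
    rw [RingHom.mem_ker] at ha
    rw [ha, zero_sub, neg_eq_zero] at this
    exact this
  have hZp' : Polynomial.aeval (Z 0) p' = 0 := by
    rw [RingHom.mem_ker, ← Polynomial.aeval_algHom_apply, hρ] at hker
    exact hker
  have : p' = 0 := aeval_nilpotent_indep (hnil 0) hreg hdeg hZp'
  rw [this] at hsub
  simpa using hsub
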